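/- Let I₂ be the ideal of a commutative ring R generated by the elements r² - r for r ∈ R. The map D: R → I₂ given by D(r) = r² - r is a universal quadratic derivation: for every R-module M and every quadratic derivation d: R → M, there exists a unique R-linear map φ: I₂ → M with d = φ ∘ D. -/

import Mathlib

/-- A quadratic derivation on `R` with values in an `R`-module `M`. -/
def IsQuadDeriv (R : Type*) {M : Type*} [CommRing R] [AddCommGroup M] [Module R M]
    (d : R → M) : Prop :=
  (∀ r s : R, d (r + s) = d r + d s + (r * s) • d 2) ∧
  (∀ r s : R, d (r * s) = r • d s + s ^ 2 • d r)

/-- The ideal `I₂` of `R` generated by the elements `r² - r`. -/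
def polyIdeal2 (R : Type*) [CommRing R] : Ideal R :=
  Ideal.span {x : R | ∃ r : R, x = r ^ 2 - r}

section aux

variable {R M : Type*} [CommRing R] [AddCommGroup M] [Module R M] {d : R → M}

private lemma qd_symm (hd : IsQuadDeriv R d) (r s : R) :
    (r ^ 2 - r) • d s = (s ^ 2 - s) • d r := by
  have h1 := hd.2 r s
  have h2 := hd.2 s r
  rw [mul_comm s r] at h2
  linear_combination (norm := module) h1 - h2

private lemma qd_two (hd : IsQuadDeriv R d) (r : R) :
    (2 : R) • d r = (r ^ 2 - r) • d 2 := by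
  have h := qd_symm hd r 2
  linear_combination (norm := module) -h

private lemma qd_sq (hd : IsQuadDeriv R d) (r : R) :
    d (r ^ 2) = (r + r ^ 2) • d r := by
  have h := hd.2 r r
  rw [← pow_two] at h
  linear_combination (norm := module) h

private lemma qd_A (hd : IsQuadDeriv R d) (l : R →₀ R) (s : R) :
    (s ^ 2 - s) • (Finsupp.linearCombination R d l)
      = ((Finsupp.linearCombination R (fun r : R => r ^ 2) l)
          - (Finsupp.linearCombination R (id : R → R) l)) • d s := by
  induction l using Finsupp.induction_linear with
  | zero => simp
  | add f g hf hg =>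
      simp only [map_add]
      linear_combination (norm := module) hf + hg
  | single r b =>
      simp only [Finsupp.linearCombination_single, smul_eq_mul, id_eq]
      have hs := qd_symm hd r s
      linear_combination (norm := module) - b • hs

private lemma qd_master (hd : IsQuadDeriv R d) (l : R →₀ R) :
    Finsupp.linearCombination R d l
      = d (Finsupp.linearCombination R (id : R → R) l)
        - d (Finsupp.linearCombination R (fun r : R => r ^ 2) l)
        + ((Finsupp.linearCombination R (fun r : R => r ^ 2) l)
            - (Finsupp.linearCombination R (id : R → R) l))
            • (Finsupp.linearCombination R d l)
        + (((Finsupp.linearCombination R (fun r : R => r ^ 2) l)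
            - (Finsupp.linearCombination R (id : R → R) l))
            * (Finsupp.linearCombination R (id : R → R) l)) • d 2 := by
  induction l using Finsupp.induction with
  | zero =>
      have h0 : d (0 : R) = 0 := by
        have h := hd.1 0 0
        simp only [add_zero, zero_mul, zero_smul] at h
        exact left_eq_add.mp h
      simp [h0]
  | single_add r b f hrf hb IH =>
      simp only [map_add, Finsupp.linearCombination_single, smul_eq_mul, id_eq]
      have h1 := hd.1 (b * r) (Finsupp.linearCombination R (id : R → R) f)
      have h2 := hd.1 (b * r ^ 2) (Finsupp.linearCombination R (fun r : R => r ^ 2) f)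
      have h3 := hd.2 b r
      have h4 := hd.2 b (r ^ 2)
      have h5 := qd_sq hd r
      have hsym := qd_symm hd (r ^ 2) b
      have htwo := qd_two hd r
      have hA := qd_A hd f r
      try simp only [id_eq] at h1 h2 hA
      linear_combination (norm := module) IH - h1 + h2 - h3 + h4 + (b ^ 2 : R) • h5 + hsym
        + (b ^ 2 * r - b * ((Finsupp.linearCombination R (fun r : R => r ^ 2) f)
            - (Finsupp.linearCombination R (id : R → R) f))) • htwo - b • hA

private lemma qd_ker (hd : IsQuadDeriv R d) (l : R →₀ R)
    (hl : Finsupp.linearCombination R (fun r : R => r ^ 2 - r) l = 0) :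
    Finsupp.linearCombination R d l = 0 := by
  have hPP : Finsupp.linearCombination R (fun r : R => r ^ 2 - r)
      = (Finsupp.linearCombination R (fun r : R => r ^ 2))
        - (Finsupp.linearCombination R (id : R → R)) := by
    apply Finsupp.lhom_ext
    intro a b
    simp only [Finsupp.linearCombination_single, LinearMap.sub_apply, smul_eq_mul, id_eq]
    ring
  rw [hPP] at hl
  have hQ : (Finsupp.linearCombination R (fun r : R => r ^ 2)) l
      = (Finsupp.linearCombination R (id : R → R)) l := by
    have := hl
    rw [LinearMap.sub_apply] at this
    exact sub_eq_zero.mp this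
  have hm := qd_master hd l
  rw [hQ] at hm
  simpa using hm

end aux

/-- `D : R → I₂`, `D(r) = r² - r`, is a universal quadratic derivation: every quadratic
derivation `d : R → M` factors uniquely as an `R`-linear map on `I₂` composed with `D`. -/
theorem universal_quadDeriv {R M : Type*} [CommRing R] [AddCommGroup M] [Module R M]
    (d : R → M) (hd : IsQuadDeriv R d) :
    ∃! φ : polyIdeal2 R →ₗ[R] M,
      ∀ r : R, d r = φ ⟨r ^ 2 - r, Ideal.subset_span ⟨r, rfl⟩⟩ := by
  classical
  set F : (R →₀ R) →ₗ[R] R := Finsupp.linearCombination R (fun r : R => r ^ 2 - r) with hFdef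
  set G : (R →₀ R) →ₗ[R] M := Finsupp.linearCombination R d with hGdef
  have hker : LinearMap.ker F ≤ LinearMap.ker G := by
    intro l hl
    rw [LinearMap.mem_ker] at hl ⊢
    exact qd_ker hd l hl
  have hrange : LinearMap.range F = (polyIdeal2 R : Submodule R R) := by
    rw [hFdef, Finsupp.range_linearCombination, polyIdeal2, ← Ideal.submodule_span_eq]
    congr 1
    ext x
    simp [eq_comm]
  have hmemF : ∀ l : R →₀ R, F l ∈ (polyIdeal2 R : Submodule R R) := fun l =>
    hrange ▸ LinearMap.mem_range_self F l
  set F' : (R →₀ R) →ₗ[R] (polyIdeal2 R) := F.codRestrict (polyIdeal2 R) hmemF with hF'def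
  have hsurj : Function.Surjective F' := by
    rintro ⟨x, hx⟩
    rw [← hrange] at hx
    obtain ⟨l, hl⟩ := hx
    exact ⟨l, Subtype.ext hl⟩
  set φ : (polyIdeal2 R) →ₗ[R] M :=
    ((LinearMap.ker F).liftQ G hker).comp
      (((LinearMap.quotKerEquivRange F).symm.toLinearMap).comp
        (Submodule.inclusion hrange.ge)) with hφdef
  have key : ∀ l : R →₀ R, φ (F' l) = G l := by
    intro l
    have h1 : Submodule.inclusion hrange.ge (F' l)
        = (⟨F l, LinearMap.mem_range_self F l⟩ : LinearMap.range F) := rfl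
    have h2 : (LinearMap.quotKerEquivRange F).symm
          (⟨F l, LinearMap.mem_range_self F l⟩ : LinearMap.range F)
        = (LinearMap.ker F).mkQ l := LinearMap.quotKerEquivRange_symm_apply_image F l _
    simp only [hφdef, LinearMap.comp_apply, LinearEquiv.coe_toLinearMap, h1, h2]
    rfl
  have hgen : ∀ r : R,
      (⟨r ^ 2 - r, Ideal.subset_span ⟨r, rfl⟩⟩ : polyIdeal2 R) = F' (Finsupp.single r 1) := by
    intro r
    apply Subtype.ext
    simp [hF'def, hFdef, Finsupp.linearCombination_single]
  have hφD : ∀ r : R, d r = φ ⟨r ^ 2 - r, Ideal.subset_span ⟨r, rfl⟩⟩ := by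
    intro r
    rw [hgen r, key]
    simp [hGdef, Finsupp.linearCombination_single]
  refine ⟨φ, hφD, ?_⟩
  intro ψ hψ
  have hcomp : ψ.comp F' = φ.comp F' := by
    apply Finsupp.lhom_ext
    intro a b
    have e : F' (Finsupp.single a b)
        = b • (⟨a ^ 2 - a, Ideal.subset_span ⟨a, rfl⟩⟩ : polyIdeal2 R) := by
      apply Subtype.ext
      simp [hF'def, hFdef, Finsupp.linearCombination_single]
    simp only [LinearMap.comp_apply, e, map_smul, ← hψ a, ← hφD a]
  ext x
  obtain ⟨l, rfl⟩ := hsurj x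
  exact LinearMap.congr_fun hcomp l
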